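/- Let n ≥ 1, let U be an open subset of E = EuclideanSpace ℝ (Fin n), and let u : U → ℝ be C³ with Δu(x) = n for all x ∈ U. Then for every x ∈ U, Δ(‖∇u‖²)(x) ≥ 2n; moreover, equality Δ(‖∇u‖²)(x) = 2n holds at x if and only if the Hessian of u at x is the identity, i.e. the second derivative of u at x, as a bilinear form, equals the inner product: D²u(x)[v,w] = ⟨v,w⟩ for all v, w ∈ E. -/

import Mathlib

open MeasureTheory Metric Set RealInnerProductSpace

/-- The Hessian of `u` at `x`, as a bilinear form: second derivative in directions `v`, `w`. -/
noncomputable def hess {n : ℕ} (u : EuclideanSpace ℝ (Fin n) → ℝ)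
    (x v w : EuclideanSpace ℝ (Fin n)) : ℝ :=
  fderiv ℝ (fun y => fderiv ℝ u y v) x w

/-- The Euclidean Laplacian of `u` at `x`: the trace of the second derivative. -/
noncomputable def lap {n : ℕ} (u : EuclideanSpace ℝ (Fin n) → ℝ)
    (x : EuclideanSpace ℝ (Fin n)) : ℝ :=
  ∑ i : Fin n, hess u x (EuclideanSpace.single i 1) (EuclideanSpace.single i 1)

private lemma fderiv_congr_open {n : ℕ} {F : Type*} [NormedAddCommGroup F] [NormedSpace ℝ F]
    {U : Set (EuclideanSpace ℝ (Fin n))} (hU : IsOpen U) {f g : EuclideanSpace ℝ (Fin n) → F}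
    (h : ∀ y ∈ U, f y = g y) {x : EuclideanSpace ℝ (Fin n)} (hx : x ∈ U) :
    fderiv ℝ f x = fderiv ℝ g x :=
  Filter.EventuallyEq.fderiv_eq (Filter.eventuallyEq_of_mem (hU.mem_nhds hx) h)

private lemma hess_eq' {n : ℕ} {u : EuclideanSpace ℝ (Fin n) → ℝ} {x : EuclideanSpace ℝ (Fin n)}
    (h : DifferentiableAt ℝ (fderiv ℝ u) x) (v w : EuclideanSpace ℝ (Fin n)) :
    hess u x v w = fderiv ℝ (fderiv ℝ u) x w v := by
  unfold hess
  rw [fderiv_clm_apply h (differentiableAt_const v)]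
  simp

private lemma hess_symm' {n : ℕ} {u : EuclideanSpace ℝ (Fin n) → ℝ} {x : EuclideanSpace ℝ (Fin n)}
    (h : ContDiffAt ℝ 2 u x) (v w : EuclideanSpace ℝ (Fin n)) :
    hess u x v w = hess u x w v := by
  have hd : DifferentiableAt ℝ (fderiv ℝ u) x :=
    (h.fderiv_right (m := 1) (by norm_num)).differentiableAt one_ne_zero
  rw [hess_eq' hd, hess_eq' hd]
  exact (h.isSymmSndFDerivAt (by simp [minSmoothness_of_isRCLikeNormedField])) w v

/-- Pointwise Bochner–Weitzenböck + Newton inequality for solutions of `Δu = n`,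
with the equality case `∇²u = Id`. -/
theorem stmt_11 {n : ℕ} (hn : 1 ≤ n) (U : Set (EuclideanSpace ℝ (Fin n))) (hU : IsOpen U)
    (u : EuclideanSpace ℝ (Fin n) → ℝ) (hu : ContDiffOn ℝ 3 u U)
    (hpde : ∀ x ∈ U, lap u x = (n : ℝ)) :
    ∀ x ∈ U,
      2 * (n : ℝ) ≤ lap (fun y => ‖gradient u y‖ ^ 2) x ∧
      (lap (fun y => ‖gradient u y‖ ^ 2) x = 2 * (n : ℝ) ↔
        ∀ v w : EuclideanSpace ℝ (Fin n), hess u x v w = ⟪v, w⟫) := by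
  classical
  intro x hx
  set e : Fin n → EuclideanSpace ℝ (Fin n) := fun i => EuclideanSpace.single i 1 with he
  have heq : ∀ i, EuclideanSpace.single i (1:ℝ) = e i := fun _ => rfl
  -- regularity
  have hCA : ∀ y ∈ U, ContDiffAt ℝ 3 u y := fun y hy => hu.contDiffAt (hU.mem_nhds hy)
  have hC2' : ∀ y ∈ U, ContDiffAt ℝ 2 (fderiv ℝ u) y := fun y hy =>
    (hCA y hy).fderiv_right (by norm_num)
  have hdu : ∀ y ∈ U, DifferentiableAt ℝ (fderiv ℝ u) y := fun y hy =>
    (hC2' y hy).differentiableAt (by norm_num)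
  set g : Fin n → EuclideanSpace ℝ (Fin n) → ℝ := fun i y => fderiv ℝ u y (e i) with hg
  have hCg : ∀ i, ∀ y ∈ U, ContDiffAt ℝ 2 (g i) y := fun i y hy =>
    (hC2' y hy).clm_apply contDiffAt_const
  have hdg : ∀ i, ∀ y ∈ U, DifferentiableAt ℝ (g i) y := fun i y hy =>
    (hCg i y hy).differentiableAt (by norm_num)
  set p : Fin n → Fin n → EuclideanSpace ℝ (Fin n) → ℝ :=
    fun i j y => fderiv ℝ (g i) y (e j) with hp
  have hdp : ∀ i j, ∀ y ∈ U, DifferentiableAt ℝ (p i j) y := fun i j y hy =>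
    (((hCg i y hy).fderiv_right (m := 1) (by norm_num)).clm_apply
      contDiffAt_const).differentiableAt one_ne_zero
  have hpHess : ∀ i j y, p i j y = hess u y (e i) (e j) := fun i j y => rfl
  -- gradient squared as a sum of squares on U
  have hgradsq : ∀ y ∈ U, ‖gradient u y‖ ^ 2 = ∑ i, (g i y) ^ 2 := by
    intro y hy
    have h1 : ∀ i, (gradient u y) i = g i y := by
      intro i
      have h : ⟪gradient u y, e i⟫ = fderiv ℝ u y (e i) := by
        rw [gradient]; exact InnerProductSpace.toDual_symm_apply
      simp only [he, EuclideanSpace.inner_single_right, conj_trivial, one_mul] at h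
      exact h
    have h2 : ⟪gradient u y, gradient u y⟫ = ∑ i, (g i y) ^ 2 := by
      simp only [PiLp.inner_apply, RCLike.inner_apply, h1, sq, conj_trivial]
    rw [← real_inner_self_eq_norm_sq, h2]
  -- derivative of the sum of squares on U
  have hDG : ∀ y ∈ U, HasFDerivAt (fun z => ∑ i, (g i z) ^ 2)
      (∑ i, (2 * g i y) • fderiv ℝ (g i) y) y := by
    intro y hy
    apply HasFDerivAt.fun_sum
    intro i _
    have h2 : (2 * g i y) • fderiv ℝ (g i) y
        = g i y • fderiv ℝ (g i) y + g i y • fderiv ℝ (g i) y := by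
      rw [two_mul, add_smul]
    rw [h2]
    simpa only [pow_two] using ((hdg i y hy).hasFDerivAt.fun_mul (hdg i y hy).hasFDerivAt)
  have hDGval : ∀ y ∈ U, ∀ w, fderiv ℝ (fun z => ∑ i, (g i z) ^ 2) y w
      = ∑ i, 2 * g i y * fderiv ℝ (g i) y w := by
    intro y hy w
    rw [(hDG y hy).fderiv]
    simp [smul_eq_mul]
  -- diagonal Hessian entries of the sum of squares
  have hhessG : ∀ j, hess (fun z => ∑ i, (g i z) ^ 2) x (e j) (e j)
      = ∑ i, (2 * (p i j x) ^ 2 + 2 * g i x * fderiv ℝ (p i j) x (e j)) := by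
    intro j
    unfold hess
    have hcongr : ∀ y ∈ U, (fun y => fderiv ℝ (fun z => ∑ i, (g i z) ^ 2) y (e j)) y
        = (fun y => ∑ i, 2 * g i y * p i j y) y := fun y hy => hDGval y hy (e j)
    rw [fderiv_congr_open hU hcongr hx]
    have hterm : HasFDerivAt (fun y => ∑ i, 2 * g i y * p i j y)
        (∑ i, ((2 * g i x) • fderiv ℝ (p i j) x + p i j x • ((2:ℝ) • fderiv ℝ (g i) x))) x := by
      apply HasFDerivAt.fun_sum
      intro i _
      have hc : HasFDerivAt (fun y => 2 * g i y) ((2:ℝ) • fderiv ℝ (g i) x) x :=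
        ((hdg i x hx).hasFDerivAt).const_mul 2
      exact hc.mul (hdp i j x hx).hasFDerivAt
    rw [hterm.fderiv]
    simp only [ContinuousLinearMap.sum_apply, ContinuousLinearMap.add_apply,
      ContinuousLinearMap.smul_apply, smul_eq_mul]
    refine Finset.sum_congr rfl fun i _ => ?_
    have hgi : fderiv ℝ (g i) x (e j) = p i j x := rfl
    rw [hgi]; ring
  -- symmetry of second and third derivatives
  have hpsymm : ∀ i j, ∀ y ∈ U, p i j y = p j i y := by
    intro i j y hy
    rw [hpHess, hpHess]
    exact hess_symm' ((hCA y hy).of_le (by norm_num)) _ _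
  have hT : ∀ i j, fderiv ℝ (p i j) x (e j) = fderiv ℝ (p j j) x (e i) := by
    intro i j
    have h1 : fderiv ℝ (p i j) x = fderiv ℝ (p j i) x :=
      fderiv_congr_open hU (hpsymm i j) hx
    have h2 : fderiv ℝ (p j i) x (e j) = hess (g j) x (e i) (e j) := rfl
    have h3 : hess (g j) x (e j) (e i) = fderiv ℝ (p j j) x (e i) := rfl
    rw [h1, h2, hess_symm' (hCg j x hx) (e i) (e j), h3]
  have hTsum : ∀ i, ∑ j, fderiv ℝ (p i j) x (e j) = 0 := by
    intro i
    have hsum : HasFDerivAt (fun y => ∑ j, p j j y) (∑ j, fderiv ℝ (p j j) x) x :=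
      HasFDerivAt.fun_sum fun j _ => (hdp j j x hx).hasFDerivAt
    have hlapu : ∀ y ∈ U, (fun y => ∑ j, p j j y) y = (fun _ => (n:ℝ)) y := by
      intro y hy
      have : lap u y = ∑ j, p j j y := rfl
      simp only
      rw [← this, hpde y hy]
    have h0 : (∑ j, fderiv ℝ (p j j) x) = 0 := by
      rw [← hsum.fderiv, fderiv_congr_open hU hlapu hx]
      exact fderiv_const_apply _
    calc ∑ j, fderiv ℝ (p i j) x (e j) = ∑ j, fderiv ℝ (p j j) x (e i) :=
          Finset.sum_congr rfl fun j _ => hT i j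
      _ = (∑ j, fderiv ℝ (p j j) x) (e i) := by
          rw [ContinuousLinearMap.sum_apply]
      _ = 0 := by rw [h0]; rfl
  -- the Laplacian of the squared gradient
  have hlapG : lap (fun y => ‖gradient u y‖ ^ 2) x = lap (fun z => ∑ i, (g i z) ^ 2) x := by
    unfold lap
    refine Finset.sum_congr rfl fun j _ => ?_
    unfold hess
    have hinner : ∀ y ∈ U, (fun z => fderiv ℝ (fun z => ‖gradient u z‖ ^ 2) z
          (EuclideanSpace.single j 1)) y
        = (fun z => fderiv ℝ (fun z => ∑ i, (g i z) ^ 2) z (EuclideanSpace.single j 1)) y := by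
      intro y hy
      simp only
      rw [fderiv_congr_open hU hgradsq hy]
    rw [fderiv_congr_open hU hinner hx]
  set S : ℝ := ∑ i, ∑ j, (p i j x - if i = j then 1 else 0) ^ 2 with hS
  have htrace : ∑ i, p i i x = (n:ℝ) := by
    have : lap u x = ∑ i, p i i x := rfl
    rw [← this, hpde x hx]
  have hmain : lap (fun y => ‖gradient u y‖ ^ 2) x = 2 * (n:ℝ) + 2 * S := by
    rw [hlapG]
    have h1 : lap (fun z => ∑ i, (g i z) ^ 2) x
        = ∑ j, ∑ i, (2 * (p i j x) ^ 2 + 2 * g i x * fderiv ℝ (p i j) x (e j)) := by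
      unfold lap
      exact Finset.sum_congr rfl fun j _ => hhessG j
    rw [h1]
    have h2 : ∑ j, ∑ i, (2 * (p i j x) ^ 2 + 2 * g i x * fderiv ℝ (p i j) x (e j))
        = ∑ i, ∑ j, 2 * (p i j x) ^ 2 := by
      have hcomm : (∑ j, ∑ i, (2 * (p i j x) ^ 2 + 2 * g i x * fderiv ℝ (p i j) x (e j)))
          = ∑ i, ∑ j, (2 * (p i j x) ^ 2 + 2 * g i x * fderiv ℝ (p i j) x (e j)) :=
        Finset.sum_comm
      rw [hcomm]
      refine Finset.sum_congr rfl fun i _ => ?_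
      rw [Finset.sum_add_distrib,
        (Finset.mul_sum Finset.univ (fun j => fderiv ℝ (p i j) x (e j)) (2 * g i x)).symm,
        hTsum i, mul_zero, add_zero]
    rw [h2]
    -- algebra: ∑∑ 2 p² = 2n + 2S
    have h4 : ∀ i, ∑ j, (p i j x - if i = j then 1 else 0) ^ 2
        = (∑ j, (p i j x) ^ 2) - 2 * p i i x + 1 := by
      intro i
      have hsplit : ∀ j, (p i j x - if i = j then 1 else 0) ^ 2
          = (p i j x) ^ 2 - (if i = j then 2 * p i j x - 1 else 0) := by
        intro j; split <;> ring
      rw [Finset.sum_congr rfl fun j _ => hsplit j, Finset.sum_sub_distrib,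
        Finset.sum_ite_eq]
      simp; ring
    have h5 : S = (∑ i, ∑ j, (p i j x) ^ 2) - 2 * (n:ℝ) + n := by
      rw [hS, Finset.sum_congr rfl fun i _ => h4 i, Finset.sum_add_distrib,
        Finset.sum_sub_distrib, ← Finset.mul_sum, htrace]
      simp [Finset.card_univ]
    have h6 : ∑ i, ∑ j, 2 * (p i j x) ^ 2 = 2 * ∑ i, ∑ j, (p i j x) ^ 2 := by
      simp [Finset.mul_sum]
    rw [h6]
    linarith [h5]
  have hSnonneg : (0:ℝ) ≤ S :=
    Finset.sum_nonneg fun i _ => Finset.sum_nonneg fun j _ => sq_nonneg _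
  constructor
  · rw [hmain]; linarith
  · rw [hmain]
    constructor
    · intro hEq
      have hS0 : S = 0 := by linarith
      have hzero : ∀ i j, p i j x = if i = j then 1 else 0 := by
        intro i j
        have h1 : (∑ i, ∑ j, (p i j x - if i = j then 1 else 0) ^ 2) = 0 := by
          rw [← hS]; exact hS0
        have h2 := (Finset.sum_eq_zero_iff_of_nonneg
          (fun i _ => Finset.sum_nonneg fun j _ => sq_nonneg _)).1 h1 i (Finset.mem_univ i)
        have h3 := (Finset.sum_eq_zero_iff_of_nonneg
          (fun j _ => sq_nonneg _)).1 h2 j (Finset.mem_univ j)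
        exact sub_eq_zero.1 (sq_eq_zero_iff.1 h3)
      intro v w
      have hdx : DifferentiableAt ℝ (fderiv ℝ u) x := hdu x hx
      have hBe : ∀ i j, fderiv ℝ (fderiv ℝ u) x (e j) (e i) = (if i = j then (1:ℝ) else 0) := by
        intro i j
        rw [← hess_eq' hdx (e i) (e j), ← hpHess i j x, hzero i j]
      have hv : ∑ i, v i • e i = v := by
        simpa [EuclideanSpace.basisFun_apply, EuclideanSpace.basisFun_repr, he]
          using (EuclideanSpace.basisFun (Fin n) ℝ).sum_repr v
      have hw : ∑ i, w i • e i = w := by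
        simpa [EuclideanSpace.basisFun_apply, EuclideanSpace.basisFun_repr, he]
          using (EuclideanSpace.basisFun (Fin n) ℝ).sum_repr w
      rw [hess_eq' hdx]
      conv_lhs => rw [← hw, ← hv]
      simp only [map_sum, _root_.map_smul, ContinuousLinearMap.coe_sum', Finset.sum_apply,
        ContinuousLinearMap.smul_apply, smul_eq_mul, hBe, mul_ite, mul_one, mul_zero]
      rw [PiLp.inner_apply]
      simp only [RCLike.inner_apply, conj_trivial]
      simp [Finset.sum_ite_eq, mul_comm]
    · intro hid
      have hz : ∀ i j, p i j x = if i = j then 1 else 0 := by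
        intro i j
        rw [hpHess, hid (e i) (e j), he]
        simp [EuclideanSpace.inner_single_left, EuclideanSpace.single_apply, eq_comm]
      have : S = 0 := by
        rw [hS]
        refine Finset.sum_eq_zero fun i _ => Finset.sum_eq_zero fun j _ => ?_
        rw [hz i j]; ring
      rw [this]; ring
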